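/- Let K, L, M, N be nonnegative integers with K ≤ M+N and N ≤ K+L, and let (l_T,t,r_T;r_B,b,l_B) be a sextuple of 01-words of lengths (K,L,M;N,K+L−N,M+N−K). If h⃗^{r_B,b,l_B}_{l_T,t,r_T} > 0, then l_T t ≤ b r_B and t r_T ≤ l_B b for the concatenations l_T t, b r_B, t r_T and l_B b. -/

import Mathlib

open scoped Classical

namespace HFPLpaper2014

noncomputable section

/-! ### 01-words.  `true` represents the letter 1, `false` the letter 0. -/

abbrev Word := List Bool

/-- `|ω|₁`, the number of occurrences of the letter 1. -/
def c1 (w : Word) : ℕ := w.count true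

/-- `|ω|₀`, the number of occurrences of the letter 0. -/
def c0 (w : Word) : ℕ := w.count false

/-- `d(ω)`, the number of inversions of `ω`, i.e. of pairs `k < ℓ` with
`ω_k = 1` and `ω_ℓ = 0`. -/
def dinv : Word → ℕ
  | [] => 0
  | x :: xs => (if x = true then xs.count false else 0) + dinv xs

/-- The dominance order `ω ≤ σ` on 01-words: every prefix of `ω` contains at most as
many ones as the corresponding prefix of `σ`. -/
def wordLE (u v : Word) : Prop :=
  ∀ m : ℕ, (u.take m).count true ≤ (v.take m).count true

/-- the complement `ω̄` of a word -/
def wbar (w : Word) : Word := w.map (fun x => !x)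

/-- `ω* = reverse of the complement` of a word -/
def wstar (w : Word) : Word := (w.map (fun x => !x)).reverse
/-! ### The graph `H^{K,L,M,N}`, hexagonal fully packed loop configurations and
their oriented versions. -/

/-- vertices of the square lattice -/
abbrev V : Type := ℤ × ℤ

/-- The vertex set of the graph `H^{K,L,M,N}`. -/
def inH (K L M N : ℕ) (p : V) : Prop :=
  p.2 ≤ p.1 ∧ p.2 ≤ (K : ℤ) - 1 ∧ p.2 ≤ -p.1 + 2 * ((K : ℤ) + L) ∧
  -p.1 - 1 ≤ p.2 ∧ (K : ℤ) - M - N ≤ p.2 ∧ p.1 - 2 * ((M : ℤ) + L) - 1 ≤ p.2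

/-- adjacency in the square lattice `ℤ²` -/
def latAdj (p q : V) : Prop :=
  (p.1 = q.1 ∧ (p.2 = q.2 + 1 ∨ q.2 = p.2 + 1)) ∨
  (p.2 = q.2 ∧ (p.1 = q.1 + 1 ∨ q.1 = p.1 + 1))

/-- `L_{T,i+1}`, the leftmost vertex of the `(i+1)`-st (counted from the bottom of the
top `K` rows) row, `0 ≤ i < K`; numbered from left to right. -/
def LTv (i : ℕ) : V := ((i : ℤ), (i : ℤ))

/-- `T_{i+1}`, the odd vertices of the top row, `0 ≤ i < L`. -/
def TTv (K : ℕ) (i : ℕ) : V := ((K : ℤ) + 1 + 2 * i, (K : ℤ) - 1)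

/-- `R_{T,i+1}`, the rightmost vertices of the top `M` rows, `0 ≤ i < M`. -/
def RTv (K L : ℕ) (i : ℕ) : V := ((K : ℤ) + 2 * L + 1 + i, (K : ℤ) - 1 - i)

/-- `L_{B,i+1}`, the leftmost vertices of the bottom `M+N-K` rows, `0 ≤ i < M+N-K`. -/
def LBv (i : ℕ) : V := ((i : ℤ), -(i : ℤ) - 1)

/-- `B_{i+1}`, the even vertices of the bottom row, `0 ≤ i < K+L-N`. -/
def BBv (K M N : ℕ) (i : ℕ) : V := ((M : ℤ) + N - K + 1 + 2 * i, (K : ℤ) - M - N)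

/-- `R_{B,i+1}`, the rightmost vertices of the bottom `N` rows, `0 ≤ i < N`. -/
def RBv (K L M N : ℕ) (i : ℕ) : V := ((M : ℤ) + 2 * L + K - N + 1 + i, (K : ℤ) - M - N + i)

def inLT (K : ℕ) (p : V) : Prop := ∃ i, i < K ∧ p = LTv i
def inTT (K L : ℕ) (p : V) : Prop := ∃ i, i < L ∧ p = TTv K i
def inRT (K L M : ℕ) (p : V) : Prop := ∃ i, i < M ∧ p = RTv K L i
def inLB (K M N : ℕ) (p : V) : Prop := ∃ i, i < M + N - K ∧ p = LBv i
def inBB (K L M N : ℕ) (p : V) : Prop := ∃ i, i < K + L - N ∧ p = BBv K M N i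
def inRB (K L M N : ℕ) (p : V) : Prop := ∃ i, i < N ∧ p = RBv K L M N i

/-- `𝓛_T ∪ 𝓛_B ∪ 𝓡_T ∪ 𝓡_B` -/
def inLRset (K L M N : ℕ) (p : V) : Prop :=
  inLT K p ∨ inLB K M N p ∨ inRT K L M p ∨ inRB K L M N p

/-- `𝓣 ∪ 𝓑` -/
def inTBset (K L M N : ℕ) (p : V) : Prop := inTT K L p ∨ inBB K L M N p

/-- `𝓛_T ∪ 𝓛_B` -/
def inLeft (K M N : ℕ) (p : V) : Prop := inLT K p ∨ inLB K M N p

/-- `𝓡_T ∪ 𝓡_B` -/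
def inRight (K L M N : ℕ) (p : V) : Prop := inRT K L M p ∨ inRB K L M N p

/-- The degree of a vertex `v` in a graph all of whose edges join lattice
neighbours. -/
def ndeg (A : V → V → Prop) (v : V) : ℕ :=
  (({(v.1 + 1, v.2), (v.1 - 1, v.2), (v.1, v.2 + 1), (v.1, v.2 - 1)} : Finset V).filter
    (fun w => A v w)).card

/-- A hexagonal fully packed loop configuration (HFPL) of size `(K,L,M,N)`. -/
structure HFPL (K L M N : ℕ) where
  Adj : V → V → Prop
  symm : ∀ v w, Adj v w → Adj w v
  valid : ∀ v w, Adj v w → inH K L M N v ∧ inH K L M N w ∧ latAdj v w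
  degLR : ∀ v, inLRset K L M N v → ndeg Adj v ≤ 1
  degTB : ∀ v, inTBset K L M N v → ndeg Adj v = 1
  degIn : ∀ v, inH K L M N v → ¬ inLRset K L M N v → ¬ inTBset K L M N v → ndeg Adj v = 2
  noLL : ∀ v w, inLeft K M N v → inLeft K M N w → v ≠ w → ¬ Relation.ReflTransGen Adj v w
  noRR : ∀ v w, inRight K L M N v → inRight K L M N w → v ≠ w → ¬ Relation.ReflTransGen Adj v w

/-- The boundary `(l_T,t,r_T;r_B,b,l_B)` of an HFPL. -/
def Boundary {K L M N : ℕ} (f : HFPL K L M N) (lT t rT rB b lB : Word) : Prop :=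
  (∀ i, i < K → (lT.getD i false = true ↔ ndeg f.Adj (LTv i) = 1)) ∧
  (∀ i, i < L → (t.getD i false = false ↔
     ((∃ w, (inLT K w ∨ inLB K M N w ∨ inBB K L M N w) ∧
        Relation.ReflTransGen f.Adj (TTv K i) w) ∨
      (∃ h, h < i ∧ Relation.ReflTransGen f.Adj (TTv K i) (TTv K h))))) ∧
  (∀ i, i < M → (rT.getD i false = false ↔ ndeg f.Adj (RTv K L i) = 1)) ∧
  (∀ i, i < N → (rB.getD i false = true ↔ ndeg f.Adj (RBv K L M N i) = 1)) ∧
  (∀ i, i < K + L - N → (b.getD i false = false ↔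
     ((∃ w, (inRT K L M w ∨ inRB K L M N w ∨ inTT K L w) ∧
        Relation.ReflTransGen f.Adj (BBv K M N i) w) ∨
      (∃ j, j < K + L - N ∧ i < j ∧
        Relation.ReflTransGen f.Adj (BBv K M N i) (BBv K M N j))))) ∧
  (∀ i, i < M + N - K → (lB.getD i false = false ↔ ndeg f.Adj (LBv i) = 1))

/-- `h^{r_B,b,l_B}_{l_T,t,r_T}`, the number of HFPLs with given boundary. -/
def hord (K L M N : ℕ) (lT t rT rB b lB : Word) : ℕ :=
  Nat.card {f : HFPL K L M N // Boundary f lT t rT rB b lB}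

/-- the undirected graph underlying a directed graph -/
def UAdj (E : V → V → Prop) : V → V → Prop := fun v w => E v w ∨ E w v

def outdeg (E : V → V → Prop) (v : V) : ℕ := ndeg E v
def indeg (E : V → V → Prop) (v : V) : ℕ := ndeg (fun x y => E y x) v

/-- An oriented HFPL of size `(K,L,M,N)`: an HFPL together with an orientation of
each edge such that every degree-2 vertex is incident to one incoming and one
outgoing edge, every edge attached to a vertex of `𝓛_T ∪ 𝓛_B` is outgoing and
every edge attached to a vertex of `𝓡_T ∪ 𝓡_B` is incoming. -/
structure OHFPL (K L M N : ℕ) where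
  E : V → V → Prop
  antisymm : ∀ v w, E v w → ¬ E w v
  valid : ∀ v w, E v w → inH K L M N v ∧ inH K L M N w ∧ latAdj v w
  degLR : ∀ v, inLRset K L M N v → ndeg (UAdj E) v ≤ 1
  degTB : ∀ v, inTBset K L M N v → ndeg (UAdj E) v = 1
  degIn : ∀ v, inH K L M N v → ¬ inLRset K L M N v → ¬ inTBset K L M N v →
    ndeg (UAdj E) v = 2
  noLL : ∀ v w, inLeft K M N v → inLeft K M N w → v ≠ w →
    ¬ Relation.ReflTransGen (UAdj E) v w
  noRR : ∀ v w, inRight K L M N v → inRight K L M N w → v ≠ w →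
    ¬ Relation.ReflTransGen (UAdj E) v w
  flow : ∀ v, ndeg (UAdj E) v = 2 → indeg E v = 1 ∧ outdeg E v = 1
  outL : ∀ v, inLeft K M N v → ∀ w, ¬ E w v
  inRt : ∀ v, inRight K L M N v → ∀ w, ¬ E v w

/-- The boundary `(l_T,t,r_T;r_B,b,l_B)` of an oriented HFPL. -/
def OBoundary {K L M N : ℕ} (f : OHFPL K L M N) (lT t rT rB b lB : Word) : Prop :=
  (∀ i, i < K → (lT.getD i false = true ↔ outdeg f.E (LTv i) = 1)) ∧
  (∀ i, i < L → (t.getD i false = false ↔ indeg f.E (TTv K i) = 1)) ∧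
  (∀ i, i < M → (rT.getD i false = false ↔ indeg f.E (RTv K L i) = 1)) ∧
  (∀ i, i < N → (rB.getD i false = true ↔ indeg f.E (RBv K L M N i) = 1)) ∧
  (∀ i, i < K + L - N → (b.getD i false = true ↔ indeg f.E (BBv K M N i) = 1)) ∧
  (∀ i, i < M + N - K → (lB.getD i false = false ↔ outdeg f.E (LBv i) = 1))

/-- `h⃗^{r_B,b,l_B}_{l_T,t,r_T}`, the number of oriented HFPLs with given boundary. -/
def hvec (K L M N : ℕ) (lT t rT rB b lB : Word) : ℕ :=
  Nat.card {f : OHFPL K L M N // OBoundary f lT t rT rB b lB}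
/-! ### Auxiliary material for the proof of Statement 2 -/

section DominanceProof

/-! #### Counting letters in words -/

lemma word_count_true_take (w : Word) (m : ℕ) :
    (w.take m).count true = ∑ i ∈ Finset.range m, (if w.getD i false = true then 1 else 0) := by
  induction w generalizing m with
  | nil => simp
  | cons a l ih =>
    cases m with
    | zero => simp
    | succ n =>
      rw [List.take_succ_cons, List.count_cons, Finset.sum_range_succ']
      simp only [List.getD_cons_succ, List.getD_cons_zero]
      rw [ih n]
      by_cases h : a = true <;> simp [h]

lemma word_count_false_take (w : Word) (m : ℕ) :
    (w.take m).count false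
      = ∑ i ∈ Finset.range (min m w.length), (if w.getD i false = false then 1 else 0) := by
  induction w generalizing m with
  | nil => simp
  | cons a l ih =>
    cases m with
    | zero => simp
    | succ n =>
      rw [List.take_succ_cons, List.count_cons, List.length_cons, Nat.succ_min_succ,
        Finset.sum_range_succ']
      simp only [List.getD_cons_succ, List.getD_cons_zero]
      rw [ih n]
      by_cases h : a = false <;> simp [h]

lemma word_count_add (w : Word) : w.count true + w.count false = w.length := by
  induction w with
  | nil => simp
  | cons a l ih =>
    rw [List.count_cons, List.count_cons, List.length_cons]
    cases a <;> simp <;> omega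

lemma sum_ite_getD_true (w : Word) (m : ℕ) :
    ∑ i ∈ Finset.range m, (if w.getD i false = true then 1 else 0)
      = ∑ i ∈ Finset.range (min m w.length), (if w.getD i false = true then 1 else 0) := by
  refine (Finset.sum_subset ?_ ?_).symm
  · intro i hi
    simp only [Finset.mem_range] at *
    omega
  · intro i hi hni
    simp only [Finset.mem_range] at *
    rw [List.getD_eq_default]
    · simp
    · omega

/-! #### Characterisations of the distinguished vertices -/

/-- the union of all families of distinguished vertices -/
def specP (K L M N : ℕ) (p : V) : Prop :=
  inLT K p ∨ inTT K L p ∨ inRT K L M p ∨ inLB K M N p ∨ inBB K L M N p ∨ inRB K L M N p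

lemma inLT_iff {K : ℕ} {p : V} :
    inLT K p ↔ p.2 = p.1 ∧ 0 ≤ p.1 ∧ p.1 < (K : ℤ) := by
  obtain ⟨x, y⟩ := p
  constructor
  · rintro ⟨i, hi, h⟩
    simp only [LTv, Prod.mk.injEq] at h
    refine ⟨by omega, by omega, by omega⟩
  · rintro ⟨h1, h2, h3⟩
    refine ⟨x.toNat, by omega, ?_⟩
    simp only [LTv, Prod.mk.injEq]
    constructor <;> omega

lemma inTT_iff {K L : ℕ} {p : V} :
    inTT K L p ↔ p.2 = (K : ℤ) - 1 ∧ (K : ℤ) + 1 ≤ p.1 ∧ p.1 < (K : ℤ) + 2 * L ∧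
      (2 : ℤ) ∣ (p.1 - K - 1) := by
  obtain ⟨x, y⟩ := p
  constructor
  · rintro ⟨i, hi, h⟩
    simp only [TTv, Prod.mk.injEq] at h
    refine ⟨by omega, by omega, by omega, ⟨(i : ℤ), by omega⟩⟩
  · rintro ⟨h1, h2, h3, q, hq⟩
    refine ⟨q.toNat, by omega, ?_⟩
    simp only [TTv, Prod.mk.injEq]
    constructor <;> omega

lemma inRT_iff {K L M : ℕ} {p : V} :
    inRT K L M p ↔ p.1 + p.2 = 2 * (K : ℤ) + 2 * L ∧ (K : ℤ) - M ≤ p.2 ∧ p.2 ≤ (K : ℤ) - 1 := by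
  obtain ⟨x, y⟩ := p
  constructor
  · rintro ⟨i, hi, h⟩
    simp only [RTv, Prod.mk.injEq] at h
    refine ⟨by omega, by omega, by omega⟩
  · rintro ⟨h1, h2, h3⟩
    refine ⟨((K : ℤ) - 1 - y).toNat, by omega, ?_⟩
    simp only [RTv, Prod.mk.injEq]
    constructor <;> omega

lemma inLB_iff {K M N : ℕ} {p : V} :
    inLB K M N p ↔ p.2 = -p.1 - 1 ∧ 0 ≤ p.1 ∧ p.1 + K < (M : ℤ) + N := by
  obtain ⟨x, y⟩ := p
  constructor
  · rintro ⟨i, hi, h⟩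
    simp only [LBv, Prod.mk.injEq] at h
    refine ⟨by omega, by omega, by omega⟩
  · rintro ⟨h1, h2, h3⟩
    refine ⟨x.toNat, by omega, ?_⟩
    simp only [LBv, Prod.mk.injEq]
    constructor <;> omega

lemma inBB_iff {K L M N : ℕ} {p : V} :
    inBB K L M N p ↔ p.2 = (K : ℤ) - M - N ∧ (M : ℤ) + N - K + 1 ≤ p.1 ∧
      p.1 + 2 * N < (M : ℤ) + N + K + 2 * L + 1 ∧ (2 : ℤ) ∣ (p.1 - ((M : ℤ) + N - K + 1)) := by
  obtain ⟨x, y⟩ := p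
  constructor
  · rintro ⟨i, hi, h⟩
    simp only [BBv, Prod.mk.injEq] at h
    refine ⟨by omega, by omega, by omega, ⟨(i : ℤ), by omega⟩⟩
  · rintro ⟨h1, h2, h3, q, hq⟩
    refine ⟨q.toNat, by omega, ?_⟩
    simp only [BBv, Prod.mk.injEq]
    constructor <;> omega

lemma inRB_iff {K L M N : ℕ} {p : V} :
    inRB K L M N p ↔ p.1 - p.2 = 2 * (M : ℤ) + 2 * L + 1 ∧ (K : ℤ) - M - N ≤ p.2 ∧
      p.2 < (K : ℤ) - M := by
  obtain ⟨x, y⟩ := p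
  constructor
  · rintro ⟨i, hi, h⟩
    simp only [RBv, Prod.mk.injEq] at h
    refine ⟨by omega, by omega, by omega⟩
  · rintro ⟨h1, h2, h3⟩
    refine ⟨(y - ((K : ℤ) - M - N)).toNat, by omega, ?_⟩
    simp only [RBv, Prod.mk.injEq]
    constructor <;> omega

lemma specP_iff {K L M N : ℕ} {p : V} :
    specP K L M N p ↔
      ((p.2 = p.1 ∧ 0 ≤ p.1 ∧ p.1 < (K : ℤ)) ∨
       (p.2 = (K : ℤ) - 1 ∧ (K : ℤ) + 1 ≤ p.1 ∧ p.1 < (K : ℤ) + 2 * L ∧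
         (2 : ℤ) ∣ (p.1 - K - 1)) ∨
       (p.1 + p.2 = 2 * (K : ℤ) + 2 * L ∧ (K : ℤ) - M ≤ p.2 ∧ p.2 ≤ (K : ℤ) - 1) ∨
       (p.2 = -p.1 - 1 ∧ 0 ≤ p.1 ∧ p.1 + K < (M : ℤ) + N) ∨
       (p.2 = (K : ℤ) - M - N ∧ (M : ℤ) + N - K + 1 ≤ p.1 ∧
         p.1 + 2 * N < (M : ℤ) + N + K + 2 * L + 1 ∧
         (2 : ℤ) ∣ (p.1 - ((M : ℤ) + N - K + 1))) ∨
       (p.1 - p.2 = 2 * (M : ℤ) + 2 * L + 1 ∧ (K : ℤ) - M - N ≤ p.2 ∧ p.2 < (K : ℤ) - M)) := by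
  unfold specP
  rw [inLT_iff, inTT_iff, inRT_iff, inLB_iff, inBB_iff, inRB_iff]

/-! #### The vertex set as a finite set -/

/-- A finite set containing exactly the vertices of `H^{K,L,M,N}`. -/
def hbox (K L M N : ℕ) : Finset V :=
  (Finset.Icc (-(K : ℤ)) ((K : ℤ) + 2 * L + M + N) ×ˢ
    Finset.Icc ((K : ℤ) - M - N) ((K : ℤ) - 1)).filter (fun p => inH K L M N p)

lemma mem_hbox {K L M N : ℕ} {p : V} : p ∈ hbox K L M N ↔ inH K L M N p := by
  obtain ⟨x, y⟩ := p
  simp only [hbox, Finset.mem_filter, Finset.mem_product, Finset.mem_Icc]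
  simp only [inH]
  constructor
  · tauto
  · intro h
    refine ⟨⟨⟨?_, ?_⟩, ?_, ?_⟩, h⟩ <;> omega

/-! #### Degrees, the edge set and flow counting -/

lemma latAdj_cases {v w : V} (h : latAdj v w) :
    w = (v.1 + 1, v.2) ∨ w = (v.1 - 1, v.2) ∨ w = (v.1, v.2 + 1) ∨ w = (v.1, v.2 - 1) := by
  obtain ⟨a, b⟩ := v; obtain ⟨c, d⟩ := w
  simp only [latAdj, Prod.mk.injEq] at h ⊢
  omega

lemma latAdj_symm {v w : V} (h : latAdj v w) : latAdj w v := by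
  obtain ⟨a, b⟩ := v; obtain ⟨c, d⟩ := w
  simp only [latAdj] at h ⊢
  omega

lemma mem_nbrs_of_latAdj {v w : V} (h : latAdj v w) :
    w ∈ ({(v.1 + 1, v.2), (v.1 - 1, v.2), (v.1, v.2 + 1), (v.1, v.2 - 1)} : Finset V) := by
  rcases latAdj_cases h with h' | h' | h' | h' <;> subst h' <;> simp

lemma ndeg_UAdj_eq {E : V → V → Prop} (hanti : ∀ v w, E v w → ¬ E w v) (v : V) :
    ndeg (UAdj E) v = outdeg E v + indeg E v := by
  have hdis : Disjoint
      (({(v.1 + 1, v.2), (v.1 - 1, v.2), (v.1, v.2 + 1), (v.1, v.2 - 1)} : Finset V).filter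
        (fun w => E v w))
      (({(v.1 + 1, v.2), (v.1 - 1, v.2), (v.1, v.2 + 1), (v.1, v.2 - 1)} : Finset V).filter
        (fun w => E w v)) := by
    rw [Finset.disjoint_left]
    intro a ha hb
    exact hanti _ _ (Finset.mem_filter.mp ha).2 (Finset.mem_filter.mp hb).2
  simp only [ndeg, outdeg, indeg, UAdj]
  rw [← Finset.card_union_of_disjoint hdis]
  congr 1
  ext a
  rw [Finset.mem_union, Finset.mem_filter, Finset.mem_filter]
  exact (@Finset.mem_filter _ _ (fun w => Classical.propDecidable (UAdj E v w)) _ _).trans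
    (by unfold UAdj; tauto)

variable {K L M N : ℕ}

/-- The edge set of an oriented HFPL as a finite set. -/
def ES (f : OHFPL K L M N) : Finset (V × V) :=
  ((hbox K L M N) ×ˢ (hbox K L M N)).filter (fun e => f.E e.1 e.2)

lemma mem_ES {f : OHFPL K L M N} {e : V × V} : e ∈ ES f ↔ f.E e.1 e.2 := by
  simp only [ES, Finset.mem_filter, Finset.mem_product, mem_hbox]
  constructor
  · tauto
  · intro h
    exact ⟨⟨(f.valid _ _ h).1, (f.valid _ _ h).2.1⟩, h⟩

lemma outdeg_eq_card (f : OHFPL K L M N) (v : V) :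
    outdeg f.E v = ((ES f).filter (fun e => e.1 = v)).card := by
  unfold outdeg ndeg
  apply Finset.card_bij (fun w _ => ((v, w) : V × V))
  · intro a ha
    exact Finset.mem_filter.mpr ⟨mem_ES.mpr (Finset.mem_filter.mp ha).2, rfl⟩
  · intro a ha b hb hab
    simpa using congrArg Prod.snd hab
  · intro e he
    simp only [Finset.mem_filter] at he
    obtain ⟨he1, he2⟩ := he
    have hE := mem_ES.mp he1
    rw [he2] at hE
    refine ⟨e.2, Finset.mem_filter.mpr ⟨?_, hE⟩, ?_⟩
    · have := (f.valid _ _ hE).2.2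
      exact mem_nbrs_of_latAdj this
    · exact Prod.ext he2.symm rfl

lemma indeg_eq_card (f : OHFPL K L M N) (v : V) :
    indeg f.E v = ((ES f).filter (fun e => e.2 = v)).card := by
  unfold indeg ndeg
  apply Finset.card_bij (fun w _ => ((w, v) : V × V))
  · intro a ha
    exact Finset.mem_filter.mpr ⟨mem_ES.mpr (Finset.mem_filter.mp ha).2, rfl⟩
  · intro a ha b hb hab
    simpa using congrArg Prod.fst hab
  · intro e he
    simp only [Finset.mem_filter] at he
    obtain ⟨he1, he2⟩ := he
    have hE := mem_ES.mp he1
    rw [he2] at hE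
    refine ⟨e.1, Finset.mem_filter.mpr ⟨?_, hE⟩, ?_⟩
    · exact mem_nbrs_of_latAdj (latAdj_symm (f.valid _ _ hE).2.2)
    · exact Prod.ext rfl he2.symm

lemma sum_outdeg (f : OHFPL K L M N) (A : Finset V) :
    ∑ v ∈ A, outdeg f.E v = ((ES f).filter (fun e => e.1 ∈ A)).card := by
  have hfib := Finset.card_eq_sum_card_fiberwise (f := fun e : V × V => e.1)
    (s := (ES f).filter (fun e => e.1 ∈ A)) (t := A) (fun e he => (Finset.mem_filter.mp he).2)
  rw [hfib]
  apply Finset.sum_congr rfl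
  intro v hv
  rw [outdeg_eq_card, Finset.filter_filter]
  congr 1
  ext a
  simp only [Finset.mem_filter]
  constructor
  · rintro ⟨h1, h3⟩; exact ⟨h1, h3 ▸ hv, h3⟩
  · rintro ⟨h1, _, h3⟩; exact ⟨h1, h3⟩

lemma sum_indeg (f : OHFPL K L M N) (A : Finset V) :
    ∑ v ∈ A, indeg f.E v = ((ES f).filter (fun e => e.2 ∈ A)).card := by
  have hfib := Finset.card_eq_sum_card_fiberwise (f := fun e : V × V => e.2)
    (s := (ES f).filter (fun e => e.2 ∈ A)) (t := A) (fun e he => (Finset.mem_filter.mp he).2)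
  rw [hfib]
  apply Finset.sum_congr rfl
  intro v hv
  rw [indeg_eq_card, Finset.filter_filter]
  congr 1
  ext a
  simp only [Finset.mem_filter]
  constructor
  · rintro ⟨h1, h3⟩; exact ⟨h1, h3 ▸ hv, h3⟩
  · rintro ⟨h1, _, h3⟩; exact ⟨h1, h3⟩

/-- The basic flow-counting inequality. -/
lemma core_le (f : OHFPL K L M N) (P Q : V → Prop)
    (h : ∀ v w, f.E v w → Q v → P w) :
    ∑ v ∈ (hbox K L M N).filter Q, outdeg f.E v
      ≤ ∑ v ∈ (hbox K L M N).filter P, indeg f.E v := by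
  rw [sum_outdeg, sum_indeg]
  apply Finset.card_le_card
  intro e he
  have h1 := Finset.mem_filter.mp he
  have hE := mem_ES.mp h1.1
  exact Finset.mem_filter.mpr ⟨h1.1, Finset.mem_filter.mpr
    ⟨mem_hbox.mpr (f.valid _ _ hE).2.1, h _ _ hE (Finset.mem_filter.mp h1.2).2⟩⟩

/-! #### Distinguished vertices lie in `H`, and are pairwise distinct -/

lemma LTv_inH (hKMN : K ≤ M + N) {i : ℕ} (hi : i < K) : inH K L M N (LTv i) := by
  simp only [inH, LTv]; omega

lemma TTv_inH (hMN : 1 ≤ M + N) {i : ℕ} (hi : i < L) : inH K L M N (TTv K i) := by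
  simp only [inH, TTv]; omega

lemma RTv_inH (hNKL : N ≤ K + L) {i : ℕ} (hi : i < M) : inH K L M N (RTv K L i) := by
  simp only [inH, RTv]; omega

lemma LBv_inH (hNKL : N ≤ K + L) {i : ℕ} (hi : i < M + N - K) :
    inH K L M N (LBv i) := by
  simp only [inH, LBv]; omega

lemma BBv_inH (hKMN : K ≤ M + N) (hMN : 1 ≤ M + N) {i : ℕ}
    (hi : i < K + L - N) : inH K L M N (BBv K M N i) := by
  simp only [inH, BBv]; omega

lemma RBv_inH (hNKL : N ≤ K + L) {i : ℕ} (hi : i < N) : inH K L M N (RBv K L M N i) := by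
  simp only [inH, RBv]; omega

lemma LTv_inj {i j : ℕ} (h : LTv i = LTv j) : i = j := by
  have := congrArg Prod.fst h; simp only [LTv] at this; omega

lemma TTv_inj {i j : ℕ} (h : TTv K i = TTv K j) : i = j := by
  have := congrArg Prod.fst h; simp only [TTv] at this; omega

lemma RTv_inj {i j : ℕ} (h : RTv K L i = RTv K L j) : i = j := by
  have := congrArg Prod.fst h; simp only [RTv] at this; omega

lemma LBv_inj {i j : ℕ} (h : LBv i = LBv j) : i = j := by
  have := congrArg Prod.fst h; simp only [LBv] at this; omega

lemma BBv_inj {i j : ℕ} (h : BBv K M N i = BBv K M N j) : i = j := by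
  have := congrArg Prod.fst h; simp only [BBv] at this; omega

lemma RBv_inj {i j : ℕ} (h : RBv K L M N i = RBv K L M N j) : i = j := by
  have := congrArg Prod.fst h; simp only [RBv] at this; omega

/-! #### Degrees of the various kinds of vertices -/

variable {f : OHFPL K L M N} {lT t rT rB b lB : Word}

lemma indeg_eq_zero_left (f : OHFPL K L M N) {v : V} (hv : inLeft K M N v) :
    indeg f.E v = 0 := by
  simp only [indeg, ndeg, Finset.card_eq_zero, Finset.filter_eq_empty_iff]
  intro w _
  exact f.outL v hv w

lemma outdeg_eq_zero_right (f : OHFPL K L M N) {v : V} (hv : inRight K L M N v) :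
    outdeg f.E v = 0 := by
  simp only [outdeg, ndeg, Finset.card_eq_zero, Finset.filter_eq_empty_iff]
  intro w _
  exact f.inRt v hv w

lemma interior_flow (f : OHFPL K L M N) {v : V} (hH : inH K L M N v)
    (hns : ¬ specP K L M N v) : indeg f.E v = 1 ∧ outdeg f.E v = 1 := by
  apply f.flow
  apply f.degIn v hH
  · intro hc
    apply hns
    unfold specP
    unfold inLRset at hc
    tauto
  · intro hc
    apply hns
    unfold specP
    unfold inTBset at hc
    tauto

lemma outdeg_LTv_eq (hOB : OBoundary f lT t rT rB b lB) {i : ℕ} (hi : i < K) :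
    outdeg f.E (LTv i) = if lT.getD i false = true then 1 else 0 := by
  have h1 : outdeg f.E (LTv i) + indeg f.E (LTv i) ≤ 1 := by
    rw [← ndeg_UAdj_eq f.antisymm]
    exact f.degLR _ (Or.inl ⟨i, hi, rfl⟩)
  have h2 := hOB.1 i hi
  by_cases hc : lT.getD i false = true
  · rw [if_pos hc]; exact h2.mp hc
  · rw [if_neg hc]
    have h3 : ¬ _ = 1 := fun h => hc (h2.mpr h)
    omega

lemma outdeg_LBv_eq (hOB : OBoundary f lT t rT rB b lB) {i : ℕ} (hi : i < M + N - K) :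
    outdeg f.E (LBv i) = if lB.getD i false = false then 1 else 0 := by
  have h1 : outdeg f.E (LBv i) + indeg f.E (LBv i) ≤ 1 := by
    rw [← ndeg_UAdj_eq f.antisymm]
    exact f.degLR _ (Or.inr (Or.inl ⟨i, hi, rfl⟩))
  have h2 := hOB.2.2.2.2.2 i hi
  by_cases hc : lB.getD i false = false
  · rw [if_pos hc]; exact h2.mp hc
  · rw [if_neg hc]
    have h3 : ¬ _ = 1 := fun h => hc (h2.mpr h)
    omega

lemma indeg_RTv_eq (hOB : OBoundary f lT t rT rB b lB) {i : ℕ} (hi : i < M) :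
    indeg f.E (RTv K L i) = if rT.getD i false = false then 1 else 0 := by
  have h1 : outdeg f.E (RTv K L i) + indeg f.E (RTv K L i) ≤ 1 := by
    rw [← ndeg_UAdj_eq f.antisymm]
    exact f.degLR _ (Or.inr (Or.inr (Or.inl ⟨i, hi, rfl⟩)))
  have h2 := hOB.2.2.1 i hi
  by_cases hc : rT.getD i false = false
  · rw [if_pos hc]; exact h2.mp hc
  · rw [if_neg hc]
    have h3 : ¬ _ = 1 := fun h => hc (h2.mpr h)
    omega

lemma indeg_RBv_eq (hOB : OBoundary f lT t rT rB b lB) {i : ℕ} (hi : i < N) :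
    indeg f.E (RBv K L M N i) = if rB.getD i false = true then 1 else 0 := by
  have h1 : outdeg f.E (RBv K L M N i) + indeg f.E (RBv K L M N i) ≤ 1 := by
    rw [← ndeg_UAdj_eq f.antisymm]
    exact f.degLR _ (Or.inr (Or.inr (Or.inr ⟨i, hi, rfl⟩)))
  have h2 := hOB.2.2.2.1 i hi
  by_cases hc : rB.getD i false = true
  · rw [if_pos hc]; exact h2.mp hc
  · rw [if_neg hc]
    have h3 : ¬ _ = 1 := fun h => hc (h2.mpr h)
    omega

lemma indeg_TTv_eq (hOB : OBoundary f lT t rT rB b lB) {i : ℕ} (hi : i < L) :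
    indeg f.E (TTv K i) = if t.getD i false = false then 1 else 0 := by
  have h1 : outdeg f.E (TTv K i) + indeg f.E (TTv K i) = 1 := by
    rw [← ndeg_UAdj_eq f.antisymm]
    exact f.degTB _ (Or.inl ⟨i, hi, rfl⟩)
  have h2 := hOB.2.1 i hi
  by_cases hc : t.getD i false = false
  · rw [if_pos hc]; exact h2.mp hc
  · rw [if_neg hc]
    have h3 : ¬ _ = 1 := fun h => hc (h2.mpr h)
    omega

lemma outdeg_TTv_eq (hOB : OBoundary f lT t rT rB b lB) {i : ℕ} (hi : i < L) :
    outdeg f.E (TTv K i) = if t.getD i false = true then 1 else 0 := by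
  have h1 : outdeg f.E (TTv K i) + indeg f.E (TTv K i) = 1 := by
    rw [← ndeg_UAdj_eq f.antisymm]
    exact f.degTB _ (Or.inl ⟨i, hi, rfl⟩)
  have h2 := hOB.2.1 i hi
  by_cases hc : t.getD i false = false
  · rw [if_neg (by rw [hc]; simp)]
    have h3 := h2.mp hc
    omega
  · have hval : t.getD i false = true := by
      cases h : t.getD i false
      · exact absurd h hc
      · rfl
    rw [if_pos hval]
    have h3 : ¬ _ = 1 := fun h => hc (h2.mpr h)
    omega

lemma indeg_BBv_eq (hOB : OBoundary f lT t rT rB b lB) {i : ℕ} (hi : i < K + L - N) :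
    indeg f.E (BBv K M N i) = if b.getD i false = true then 1 else 0 := by
  have h1 : outdeg f.E (BBv K M N i) + indeg f.E (BBv K M N i) = 1 := by
    rw [← ndeg_UAdj_eq f.antisymm]
    exact f.degTB _ (Or.inr ⟨i, hi, rfl⟩)
  have h2 := hOB.2.2.2.2.1 i hi
  by_cases hc : b.getD i false = true
  · rw [if_pos hc]; exact h2.mp hc
  · rw [if_neg hc]
    have h3 : ¬ _ = 1 := fun h => hc (h2.mpr h)
    omega

lemma outdeg_BBv_eq (hOB : OBoundary f lT t rT rB b lB) {i : ℕ} (hi : i < K + L - N) :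
    outdeg f.E (BBv K M N i) = if b.getD i false = false then 1 else 0 := by
  have h1 : outdeg f.E (BBv K M N i) + indeg f.E (BBv K M N i) = 1 := by
    rw [← ndeg_UAdj_eq f.antisymm]
    exact f.degTB _ (Or.inr ⟨i, hi, rfl⟩)
  have h2 := hOB.2.2.2.2.1 i hi
  by_cases hc : b.getD i false = true
  · rw [if_neg (by rw [hc]; simp)]
    have h3 := h2.mp hc
    omega
  · have hval : b.getD i false = false := by
      cases h : b.getD i false
      · rfl
      · exact absurd h hc
    rw [if_pos hval]
    have h3 : ¬ _ = 1 := fun h => hc (h2.mpr h)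
    omega

/-! #### Summing over a family of distinguished vertices -/

lemma sum_special {P : V → Prop} [DecidablePred P] {vtx : ℕ → V} {r : ℕ} (g : V → ℕ)
    (hchar : ∀ v, (inH K L M N v ∧ P v) ↔ ∃ i, i < r ∧ v = vtx i)
    (hinj : ∀ i j, vtx i = vtx j → i = j) :
    ∑ v ∈ (hbox K L M N).filter P, g v = ∑ i ∈ Finset.range r, g (vtx i) := by
  have himg : (hbox K L M N).filter P = (Finset.range r).image vtx := by
    ext v
    simp only [Finset.mem_filter, mem_hbox, Finset.mem_image, Finset.mem_range]
    rw [hchar v]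
    constructor
    · rintro ⟨i, h1, h2⟩; exact ⟨i, h1, h2.symm⟩
    · rintro ⟨i, h1, h2⟩; exact ⟨i, h1, h2.symm⟩
  rw [himg, Finset.sum_image (fun i _ j _ h => hinj i j h)]

/-! #### The first dominance inequality -/

/-- vertices on even diagonals `x+y ≤ 2m-2` -/
def Q1 (m : ℕ) : V → Prop := fun v => (2 : ℤ) ∣ (v.1 + v.2) ∧ v.1 + v.2 ≤ 2 * (m : ℤ) - 2

/-- vertices on odd diagonals `x+y ≤ 2m-1` -/
def P1 (m : ℕ) : V → Prop := fun v => ¬ (2 : ℤ) ∣ (v.1 + v.2) ∧ v.1 + v.2 ≤ 2 * (m : ℤ) - 1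

lemma filter_ext (s : Finset V) (p q : V → Prop) [DecidablePred p] [DecidablePred q]
    (h : ∀ v, p v ↔ q v) :
    s.filter p = s.filter q := by
  ext v
  simp only [Finset.mem_filter]
  rw [h v]


set_option maxHeartbeats 1000000 in
lemma int_card_eq1 (hKMN : K ≤ M + N) (hNKL : N ≤ K + L) (hMN : 1 ≤ M + N) (m : ℕ) :
    ((hbox K L M N).filter (fun v => P1 m v ∧ ¬ specP K L M N v)).card
      = ((hbox K L M N).filter (fun v => Q1 m v ∧ ¬ specP K L M N v)).card := by
  apply Finset.card_bij' (fun v _ => ((v.1, v.2 - 1) : V)) (fun v _ => ((v.1, v.2 + 1) : V))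
  · intro v hv
    obtain ⟨x, y⟩ := v
    obtain ⟨hb, hPv, hns⟩ := Finset.mem_filter.mp hv
    obtain ⟨hd, hle⟩ := hPv
    have hH := mem_hbox.mp hb
    rw [specP_iff] at hns
    simp only [inH] at hH
    apply Finset.mem_filter.mpr
    refine ⟨mem_hbox.mpr ?_, ⟨?_, ?_⟩, ?_⟩
    · simp only [inH]
      omega
    · show (2 : ℤ) ∣ (x + (y - 1))
      omega
    · show x + (y - 1) ≤ 2 * (m : ℤ) - 2
      omega
    · rw [specP_iff]
      omega
  · intro v hv
    obtain ⟨x, y⟩ := v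
    obtain ⟨hb, hQv, hns⟩ := Finset.mem_filter.mp hv
    obtain ⟨hd, hle⟩ := hQv
    have hH := mem_hbox.mp hb
    rw [specP_iff] at hns
    simp only [inH] at hH
    apply Finset.mem_filter.mpr
    refine ⟨mem_hbox.mpr ?_, ⟨?_, ?_⟩, ?_⟩
    · simp only [inH]
      omega
    · show ¬ (2 : ℤ) ∣ (x + (y + 1))
      omega
    · show x + (y + 1) ≤ 2 * (m : ℤ) - 1
      omega
    · rw [specP_iff]
      omega
  · intro v hv
    exact Prod.ext rfl (by show v.2 - 1 + 1 = v.2; omega)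
  · intro v hv
    exact Prod.ext rfl (by show v.2 + 1 - 1 = v.2; omega)

set_option maxHeartbeats 1000000 in
lemma key1 (hKMN : K ≤ M + N) (hNKL : N ≤ K + L) (hMN : 1 ≤ M + N)
    (f : OHFPL K L M N) (lT t rT rB b lB : Word) (hOB : OBoundary f lT t rT rB b lB)
    (hlT : lT.length = K) (ht : t.length = L) (hrB : rB.length = N)
    (hbl : b.length = K + L - N) (m : ℕ) (hm : m ≤ K + L) :
    (lT.take m).count true + (t.take (m - K)).count true
      ≤ (b.take m).count true + (rB.take (m - (K + L - N))).count true := by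
  classical
  -- the core flow inequality
  have hcore : ∑ v ∈ (hbox K L M N).filter (Q1 m), outdeg f.E v
      ≤ ∑ v ∈ (hbox K L M N).filter (P1 m), indeg f.E v := by
    apply core_le
    intro v w hE hQv
    have hlat := (f.valid _ _ hE).2.2
    obtain ⟨hd, hle⟩ := hQv
    have hsum : w.1 + w.2 = v.1 + v.2 + 1 ∨ w.1 + w.2 = v.1 + v.2 - 1 := by
      rcases latAdj_cases hlat with h | h | h | h <;> subst h <;> dsimp only <;> omega
    exact ⟨by omega, by omega⟩
  -- decompose the left-hand side
  have hs1 : ((hbox K L M N).filter (Q1 m)).filter (inLT K)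
      = (hbox K L M N).filter (fun v => Q1 m v ∧ inLT K v) := Finset.filter_filter _ _ _
  have hs2 : ((hbox K L M N).filter (Q1 m)).filter (fun v => ¬ inLT K v)
      = (hbox K L M N).filter (fun v => Q1 m v ∧ ¬ inLT K v) := Finset.filter_filter _ _ _
  have hsplit1 : ∑ v ∈ (hbox K L M N).filter (Q1 m), outdeg f.E v
      = ∑ v ∈ (hbox K L M N).filter (fun v => Q1 m v ∧ inLT K v), outdeg f.E v
        + ∑ v ∈ (hbox K L M N).filter (fun v => Q1 m v ∧ ¬ inLT K v), outdeg f.E v := by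
    have h := Finset.sum_filter_add_sum_filter_not ((hbox K L M N).filter (Q1 m)) (inLT K)
      (fun v => outdeg f.E v)
    rw [hs1, hs2] at h
    exact h.symm
  have hs3 : ((hbox K L M N).filter (fun v => Q1 m v ∧ ¬ inLT K v)).filter (inTT K L)
      = (hbox K L M N).filter (fun v => (Q1 m v ∧ ¬ inLT K v) ∧ inTT K L v) :=
    Finset.filter_filter _ _ _
  have hs4 : ((hbox K L M N).filter (fun v => Q1 m v ∧ ¬ inLT K v)).filter
        (fun v => ¬ inTT K L v)
      = (hbox K L M N).filter (fun v => (Q1 m v ∧ ¬ inLT K v) ∧ ¬ inTT K L v) :=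
    Finset.filter_filter _ _ _
  have hsplit2 : ∑ v ∈ (hbox K L M N).filter (fun v => Q1 m v ∧ ¬ inLT K v), outdeg f.E v
      = ∑ v ∈ (hbox K L M N).filter (fun v => (Q1 m v ∧ ¬ inLT K v) ∧ inTT K L v),
          outdeg f.E v
        + ∑ v ∈ (hbox K L M N).filter (fun v => (Q1 m v ∧ ¬ inLT K v) ∧ ¬ inTT K L v),
          outdeg f.E v := by
    have h := Finset.sum_filter_add_sum_filter_not
      ((hbox K L M N).filter (fun v => Q1 m v ∧ ¬ inLT K v)) (inTT K L)
      (fun v => outdeg f.E v)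
    rw [hs3, hs4] at h
    exact h.symm
  have hremQ : (hbox K L M N).filter (fun v => (Q1 m v ∧ ¬ inLT K v) ∧ ¬ inTT K L v)
      = (hbox K L M N).filter (fun v => Q1 m v ∧ ¬ specP K L M N v) := by
    apply filter_ext
    intro v
    constructor
    · rintro ⟨⟨hQv, hnLT⟩, hnTT⟩
      refine ⟨hQv, ?_⟩
      intro hs
      obtain ⟨hd, hle⟩ := hQv
      rw [specP_iff] at hs
      rw [inLT_iff] at hnLT
      rw [inTT_iff] at hnTT
      omega
    · rintro ⟨hQv, hns⟩
      exact ⟨⟨hQv, fun h => hns (Or.inl h)⟩, fun h => hns (Or.inr (Or.inl h))⟩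
  -- evaluate the pieces of the left-hand side
  have hLT : ∑ v ∈ (hbox K L M N).filter (fun v => Q1 m v ∧ inLT K v), outdeg f.E v
      = ∑ i ∈ Finset.range (min m K), (if lT.getD i false = true then 1 else 0) := by
    have hchar : ∀ v, (inH K L M N v ∧ (Q1 m v ∧ inLT K v))
        ↔ ∃ i, i < min m K ∧ v = LTv i := by
      intro v
      constructor
      · rintro ⟨hH, hQv, i, hiK, rfl⟩
        obtain ⟨hd, hle⟩ := hQv
        simp only [LTv] at hle
        exact ⟨i, by omega, rfl⟩
      · rintro ⟨i, hi, rfl⟩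
        refine ⟨LTv_inH hKMN (by omega), ⟨?_, ?_⟩, ⟨i, by omega, rfl⟩⟩
        · show (2 : ℤ) ∣ ((LTv i).1 + (LTv i).2)
          simp only [LTv]
          omega
        · show (LTv i).1 + (LTv i).2 ≤ 2 * (m : ℤ) - 2
          simp only [LTv]
          omega
    refine (sum_special (fun v => outdeg f.E v) hchar (fun i j h => LTv_inj h)).trans ?_
    apply Finset.sum_congr rfl
    intro i hi
    exact outdeg_LTv_eq hOB (by have := Finset.mem_range.mp hi; omega)
  have hTT : ∑ v ∈ (hbox K L M N).filter (fun v => (Q1 m v ∧ ¬ inLT K v) ∧ inTT K L v),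
        outdeg f.E v
      = ∑ i ∈ Finset.range (min (m - K) L), (if t.getD i false = true then 1 else 0) := by
    have hchar : ∀ v, (inH K L M N v ∧ ((Q1 m v ∧ ¬ inLT K v) ∧ inTT K L v))
        ↔ ∃ i, i < min (m - K) L ∧ v = TTv K i := by
      intro v
      constructor
      · rintro ⟨hH, ⟨hQv, hnLT⟩, i, hiL, rfl⟩
        obtain ⟨hd, hle⟩ := hQv
        simp only [TTv] at hle
        exact ⟨i, by omega, rfl⟩
      · rintro ⟨i, hi, rfl⟩
        refine ⟨TTv_inH hMN (by omega), ⟨⟨?_, ?_⟩, ?_⟩, ⟨i, by omega, rfl⟩⟩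
        · show (2 : ℤ) ∣ ((TTv K i).1 + (TTv K i).2)
          simp only [TTv]
          omega
        · show (TTv K i).1 + (TTv K i).2 ≤ 2 * (m : ℤ) - 2
          simp only [TTv]
          omega
        · rw [inLT_iff]
          simp only [TTv]
          omega
    refine (sum_special (fun v => outdeg f.E v) hchar (fun i j h => TTv_inj h)).trans ?_
    apply Finset.sum_congr rfl
    intro i hi
    exact outdeg_TTv_eq hOB (by have := Finset.mem_range.mp hi; omega)
  have hIntQ : ∑ v ∈ (hbox K L M N).filter (fun v => Q1 m v ∧ ¬ specP K L M N v),
        outdeg f.E v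
      = ((hbox K L M N).filter (fun v => Q1 m v ∧ ¬ specP K L M N v)).card := by
    have h : ∀ v ∈ (hbox K L M N).filter (fun v => Q1 m v ∧ ¬ specP K L M N v),
        outdeg f.E v = 1 := by
      intro v hv
      obtain ⟨hb, _, hns⟩ := Finset.mem_filter.mp hv
      exact (interior_flow f (mem_hbox.mp hb) hns).2
    rw [Finset.sum_congr rfl h]
    simp
  -- decompose the right-hand side
  have hp1 : ((hbox K L M N).filter (P1 m)).filter (inBB K L M N)
      = (hbox K L M N).filter (fun v => P1 m v ∧ inBB K L M N v) := Finset.filter_filter _ _ _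
  have hp2 : ((hbox K L M N).filter (P1 m)).filter (fun v => ¬ inBB K L M N v)
      = (hbox K L M N).filter (fun v => P1 m v ∧ ¬ inBB K L M N v) := Finset.filter_filter _ _ _
  have hsplit3 : ∑ v ∈ (hbox K L M N).filter (P1 m), indeg f.E v
      = ∑ v ∈ (hbox K L M N).filter (fun v => P1 m v ∧ inBB K L M N v), indeg f.E v
        + ∑ v ∈ (hbox K L M N).filter (fun v => P1 m v ∧ ¬ inBB K L M N v), indeg f.E v := by
    have h := Finset.sum_filter_add_sum_filter_not ((hbox K L M N).filter (P1 m))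
      (inBB K L M N) (fun v => indeg f.E v)
    rw [hp1, hp2] at h
    exact h.symm
  have hp3 : ((hbox K L M N).filter (fun v => P1 m v ∧ ¬ inBB K L M N v)).filter
        (inRB K L M N)
      = (hbox K L M N).filter (fun v => (P1 m v ∧ ¬ inBB K L M N v) ∧ inRB K L M N v) :=
    Finset.filter_filter _ _ _
  have hp4 : ((hbox K L M N).filter (fun v => P1 m v ∧ ¬ inBB K L M N v)).filter
        (fun v => ¬ inRB K L M N v)
      = (hbox K L M N).filter (fun v => (P1 m v ∧ ¬ inBB K L M N v) ∧ ¬ inRB K L M N v) :=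
    Finset.filter_filter _ _ _
  have hsplit4 : ∑ v ∈ (hbox K L M N).filter (fun v => P1 m v ∧ ¬ inBB K L M N v),
        indeg f.E v
      = ∑ v ∈ (hbox K L M N).filter
            (fun v => (P1 m v ∧ ¬ inBB K L M N v) ∧ inRB K L M N v), indeg f.E v
        + ∑ v ∈ (hbox K L M N).filter
            (fun v => (P1 m v ∧ ¬ inBB K L M N v) ∧ ¬ inRB K L M N v), indeg f.E v := by
    have h := Finset.sum_filter_add_sum_filter_not
      ((hbox K L M N).filter (fun v => P1 m v ∧ ¬ inBB K L M N v)) (inRB K L M N)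
      (fun v => indeg f.E v)
    rw [hp3, hp4] at h
    exact h.symm
  have hp5 : ((hbox K L M N).filter
        (fun v => (P1 m v ∧ ¬ inBB K L M N v) ∧ ¬ inRB K L M N v)).filter (specP K L M N)
      = (hbox K L M N).filter
          (fun v => ((P1 m v ∧ ¬ inBB K L M N v) ∧ ¬ inRB K L M N v) ∧ specP K L M N v) :=
    Finset.filter_filter _ _ _
  have hp6 : ((hbox K L M N).filter
        (fun v => (P1 m v ∧ ¬ inBB K L M N v) ∧ ¬ inRB K L M N v)).filter
        (fun v => ¬ specP K L M N v)
      = (hbox K L M N).filter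
          (fun v => ((P1 m v ∧ ¬ inBB K L M N v) ∧ ¬ inRB K L M N v) ∧ ¬ specP K L M N v) :=
    Finset.filter_filter _ _ _
  have hsplit5 : ∑ v ∈ (hbox K L M N).filter
        (fun v => (P1 m v ∧ ¬ inBB K L M N v) ∧ ¬ inRB K L M N v), indeg f.E v
      = ∑ v ∈ (hbox K L M N).filter
            (fun v => ((P1 m v ∧ ¬ inBB K L M N v) ∧ ¬ inRB K L M N v) ∧ specP K L M N v),
          indeg f.E v
        + ∑ v ∈ (hbox K L M N).filter
            (fun v => ((P1 m v ∧ ¬ inBB K L M N v) ∧ ¬ inRB K L M N v) ∧ ¬ specP K L M N v),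
          indeg f.E v := by
    have h := Finset.sum_filter_add_sum_filter_not
      ((hbox K L M N).filter (fun v => (P1 m v ∧ ¬ inBB K L M N v) ∧ ¬ inRB K L M N v))
      (specP K L M N) (fun v => indeg f.E v)
    rw [hp5, hp6] at h
    exact h.symm
  have hzero : ∑ v ∈ (hbox K L M N).filter
        (fun v => ((P1 m v ∧ ¬ inBB K L M N v) ∧ ¬ inRB K L M N v) ∧ specP K L M N v),
      indeg f.E v = 0 := by
    apply Finset.sum_eq_zero
    intro v hv
    obtain ⟨hb, ⟨⟨hPv, hnBB⟩, hnRB⟩, hs⟩ := Finset.mem_filter.mp hv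
    obtain ⟨hd, hle⟩ := hPv
    have hLB : inLB K M N v := by
      rcases hs with h | h | h | h | h | h
      · exfalso; rw [inLT_iff] at h; omega
      · exfalso; rw [inTT_iff] at h; omega
      · exfalso; rw [inRT_iff] at h; omega
      · exact h
      · exact absurd h hnBB
      · exact absurd h hnRB
    exact indeg_eq_zero_left f (Or.inr hLB)
  have hremP : (hbox K L M N).filter
        (fun v => ((P1 m v ∧ ¬ inBB K L M N v) ∧ ¬ inRB K L M N v) ∧ ¬ specP K L M N v)
      = (hbox K L M N).filter (fun v => P1 m v ∧ ¬ specP K L M N v) := by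
    apply filter_ext
    intro v
    constructor
    · rintro ⟨⟨⟨hPv, _⟩, _⟩, hns⟩
      exact ⟨hPv, hns⟩
    · rintro ⟨hPv, hns⟩
      exact ⟨⟨⟨hPv, fun h => hns (Or.inr (Or.inr (Or.inr (Or.inr (Or.inl h)))))⟩,
        fun h => hns (Or.inr (Or.inr (Or.inr (Or.inr (Or.inr h)))))⟩, hns⟩
  -- evaluate the pieces of the right-hand side
  have hBB : ∑ v ∈ (hbox K L M N).filter (fun v => P1 m v ∧ inBB K L M N v), indeg f.E v
      = ∑ i ∈ Finset.range (min m (K + L - N)), (if b.getD i false = true then 1 else 0) := by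
    have hchar : ∀ v, (inH K L M N v ∧ (P1 m v ∧ inBB K L M N v))
        ↔ ∃ i, i < min m (K + L - N) ∧ v = BBv K M N i := by
      intro v
      constructor
      · rintro ⟨hH, hPv, i, hi, rfl⟩
        obtain ⟨hd, hle⟩ := hPv
        simp only [BBv] at hle
        exact ⟨i, by omega, rfl⟩
      · rintro ⟨i, hi, rfl⟩
        refine ⟨BBv_inH hKMN hMN (by omega), ⟨?_, ?_⟩, ⟨i, by omega, rfl⟩⟩
        · show ¬ (2 : ℤ) ∣ ((BBv K M N i).1 + (BBv K M N i).2)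
          simp only [BBv]
          omega
        · show (BBv K M N i).1 + (BBv K M N i).2 ≤ 2 * (m : ℤ) - 1
          simp only [BBv]
          omega
    refine (sum_special (fun v => indeg f.E v) hchar (fun i j h => BBv_inj h)).trans ?_
    apply Finset.sum_congr rfl
    intro i hi
    exact indeg_BBv_eq hOB (by have := Finset.mem_range.mp hi; omega)
  have hRB : ∑ v ∈ (hbox K L M N).filter
        (fun v => (P1 m v ∧ ¬ inBB K L M N v) ∧ inRB K L M N v), indeg f.E v
      = ∑ i ∈ Finset.range (min (m - (K + L - N)) N),
          (if rB.getD i false = true then 1 else 0) := by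
    have hchar : ∀ v, (inH K L M N v ∧ ((P1 m v ∧ ¬ inBB K L M N v) ∧ inRB K L M N v))
        ↔ ∃ i, i < min (m - (K + L - N)) N ∧ v = RBv K L M N i := by
      intro v
      constructor
      · rintro ⟨hH, ⟨hPv, _⟩, i, hi, rfl⟩
        obtain ⟨hd, hle⟩ := hPv
        simp only [RBv] at hle
        exact ⟨i, by omega, rfl⟩
      · rintro ⟨i, hi, rfl⟩
        refine ⟨RBv_inH hNKL (by omega), ⟨⟨?_, ?_⟩, ?_⟩, ⟨i, by omega, rfl⟩⟩
        · show ¬ (2 : ℤ) ∣ ((RBv K L M N i).1 + (RBv K L M N i).2)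
          simp only [RBv]
          omega
        · show (RBv K L M N i).1 + (RBv K L M N i).2 ≤ 2 * (m : ℤ) - 1
          simp only [RBv]
          omega
        · rw [inBB_iff]
          simp only [RBv]
          omega
    refine (sum_special (fun v => indeg f.E v) hchar (fun i j h => RBv_inj h)).trans ?_
    apply Finset.sum_congr rfl
    intro i hi
    exact indeg_RBv_eq hOB (by have := Finset.mem_range.mp hi; omega)
  have hIntP : ∑ v ∈ (hbox K L M N).filter (fun v => P1 m v ∧ ¬ specP K L M N v),
        indeg f.E v
      = ((hbox K L M N).filter (fun v => P1 m v ∧ ¬ specP K L M N v)).card := by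
    have h : ∀ v ∈ (hbox K L M N).filter (fun v => P1 m v ∧ ¬ specP K L M N v),
        indeg f.E v = 1 := by
      intro v hv
      obtain ⟨hb, _, hns⟩ := Finset.mem_filter.mp hv
      exact (interior_flow f (mem_hbox.mp hb) hns).1
    rw [Finset.sum_congr rfl h]
    simp
  -- the interior bijection
  have hcards : ((hbox K L M N).filter (fun v => P1 m v ∧ ¬ specP K L M N v)).card
      = ((hbox K L M N).filter (fun v => Q1 m v ∧ ¬ specP K L M N v)).card :=
    int_card_eq1 hKMN hNKL hMN m
  -- put everything together
  have eLT : (lT.take m).count true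
      = ∑ i ∈ Finset.range (min m K), (if lT.getD i false = true then 1 else 0) := by
    rw [word_count_true_take, sum_ite_getD_true, hlT]
  have eTT : (t.take (m - K)).count true
      = ∑ i ∈ Finset.range (min (m - K) L), (if t.getD i false = true then 1 else 0) := by
    rw [word_count_true_take, sum_ite_getD_true, ht]
  have eBB : (b.take m).count true
      = ∑ i ∈ Finset.range (min m (K + L - N)), (if b.getD i false = true then 1 else 0) := by
    rw [word_count_true_take, sum_ite_getD_true, hbl]
  have eRB : (rB.take (m - (K + L - N))).count true
      = ∑ i ∈ Finset.range (min (m - (K + L - N)) N),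
          (if rB.getD i false = true then 1 else 0) := by
    rw [word_count_true_take, sum_ite_getD_true, hrB]
  rw [hsplit1, hsplit2, hremQ, hLT, hTT, hIntQ] at hcore
  rw [hsplit3, hsplit4, hsplit5, hzero, hremP, hBB, hRB, hIntP] at hcore
  omega

/-! #### The second dominance inequality -/

/-- vertices on odd antidiagonals `x-y ≤ 2m-1` -/
def Q2 (m : ℕ) : V → Prop := fun v => ¬ (2 : ℤ) ∣ (v.1 - v.2) ∧ v.1 - v.2 ≤ 2 * (m : ℤ) - 1

/-- vertices on even antidiagonals `x-y ≤ 2m` -/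
def P2 (m : ℕ) : V → Prop := fun v => (2 : ℤ) ∣ (v.1 - v.2) ∧ v.1 - v.2 ≤ 2 * (m : ℤ)

set_option maxHeartbeats 1000000 in
lemma int_card_eq2 (hKMN : K ≤ M + N) (hNKL : N ≤ K + L) (hMN : 1 ≤ M + N) (m : ℕ) :
    ((hbox K L M N).filter (fun v => P2 m v ∧ ¬ specP K L M N v)).card
      = ((hbox K L M N).filter (fun v => Q2 m v ∧ ¬ specP K L M N v)).card := by
  apply Finset.card_bij' (fun v _ => ((v.1, v.2 + 1) : V)) (fun v _ => ((v.1, v.2 - 1) : V))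
  · intro v hv
    obtain ⟨x, y⟩ := v
    obtain ⟨hb, hPv, hns⟩ := Finset.mem_filter.mp hv
    obtain ⟨hd, hle⟩ := hPv
    have hH := mem_hbox.mp hb
    rw [specP_iff] at hns
    simp only [inH] at hH
    apply Finset.mem_filter.mpr
    refine ⟨mem_hbox.mpr ?_, ⟨?_, ?_⟩, ?_⟩
    · simp only [inH]
      omega
    · show ¬ (2 : ℤ) ∣ (x - (y + 1))
      omega
    · show x - (y + 1) ≤ 2 * (m : ℤ) - 1
      omega
    · rw [specP_iff]
      omega
  · intro v hv
    obtain ⟨x, y⟩ := v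
    obtain ⟨hb, hQv, hns⟩ := Finset.mem_filter.mp hv
    obtain ⟨hd, hle⟩ := hQv
    have hH := mem_hbox.mp hb
    rw [specP_iff] at hns
    simp only [inH] at hH
    apply Finset.mem_filter.mpr
    refine ⟨mem_hbox.mpr ?_, ⟨?_, ?_⟩, ?_⟩
    · simp only [inH]
      omega
    · show (2 : ℤ) ∣ (x - (y - 1))
      omega
    · show x - (y - 1) ≤ 2 * (m : ℤ)
      omega
    · rw [specP_iff]
      omega
  · intro v hv
    exact Prod.ext rfl (by show v.2 + 1 - 1 = v.2; omega)
  · intro v hv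
    exact Prod.ext rfl (by show v.2 - 1 + 1 = v.2; omega)

set_option maxHeartbeats 1000000 in
lemma key2 (hKMN : K ≤ M + N) (hNKL : N ≤ K + L) (hMN : 1 ≤ M + N)
    (f : OHFPL K L M N) (lT t rT rB b lB : Word) (hOB : OBoundary f lT t rT rB b lB)
    (ht : t.length = L) (hrT : rT.length = M) (hlB : lB.length = M + N - K)
    (hbl : b.length = K + L - N) (m : ℕ) (hm : m ≤ M + L) :
    (lB.take m).count false + (b.take (m - (M + N - K))).count false
      ≤ (t.take m).count false + (rT.take (m - L)).count false := by
  classical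
  -- the core flow inequality
  have hcore : ∑ v ∈ (hbox K L M N).filter (Q2 m), outdeg f.E v
      ≤ ∑ v ∈ (hbox K L M N).filter (P2 m), indeg f.E v := by
    apply core_le
    intro v w hE hQv
    have hlat := (f.valid _ _ hE).2.2
    obtain ⟨hd, hle⟩ := hQv
    have hsum : w.1 - w.2 = v.1 - v.2 + 1 ∨ w.1 - w.2 = v.1 - v.2 - 1 := by
      rcases latAdj_cases hlat with h | h | h | h <;> subst h <;> dsimp only <;> omega
    exact ⟨by omega, by omega⟩
  -- decompose the left-hand side
  have hs1 : ((hbox K L M N).filter (Q2 m)).filter (inLB K M N)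
      = (hbox K L M N).filter (fun v => Q2 m v ∧ inLB K M N v) := Finset.filter_filter _ _ _
  have hs2 : ((hbox K L M N).filter (Q2 m)).filter (fun v => ¬ inLB K M N v)
      = (hbox K L M N).filter (fun v => Q2 m v ∧ ¬ inLB K M N v) := Finset.filter_filter _ _ _
  have hsplit1 : ∑ v ∈ (hbox K L M N).filter (Q2 m), outdeg f.E v
      = ∑ v ∈ (hbox K L M N).filter (fun v => Q2 m v ∧ inLB K M N v), outdeg f.E v
        + ∑ v ∈ (hbox K L M N).filter (fun v => Q2 m v ∧ ¬ inLB K M N v), outdeg f.E v := by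
    have h := Finset.sum_filter_add_sum_filter_not ((hbox K L M N).filter (Q2 m)) (inLB K M N)
      (fun v => outdeg f.E v)
    rw [hs1, hs2] at h
    exact h.symm
  have hs3 : ((hbox K L M N).filter (fun v => Q2 m v ∧ ¬ inLB K M N v)).filter (inBB K L M N)
      = (hbox K L M N).filter (fun v => (Q2 m v ∧ ¬ inLB K M N v) ∧ inBB K L M N v) :=
    Finset.filter_filter _ _ _
  have hs4 : ((hbox K L M N).filter (fun v => Q2 m v ∧ ¬ inLB K M N v)).filter
        (fun v => ¬ inBB K L M N v)
      = (hbox K L M N).filter (fun v => (Q2 m v ∧ ¬ inLB K M N v) ∧ ¬ inBB K L M N v) :=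
    Finset.filter_filter _ _ _
  have hsplit2 : ∑ v ∈ (hbox K L M N).filter (fun v => Q2 m v ∧ ¬ inLB K M N v), outdeg f.E v
      = ∑ v ∈ (hbox K L M N).filter
            (fun v => (Q2 m v ∧ ¬ inLB K M N v) ∧ inBB K L M N v), outdeg f.E v
        + ∑ v ∈ (hbox K L M N).filter
            (fun v => (Q2 m v ∧ ¬ inLB K M N v) ∧ ¬ inBB K L M N v), outdeg f.E v := by
    have h := Finset.sum_filter_add_sum_filter_not
      ((hbox K L M N).filter (fun v => Q2 m v ∧ ¬ inLB K M N v)) (inBB K L M N)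
      (fun v => outdeg f.E v)
    rw [hs3, hs4] at h
    exact h.symm
  have hremQ : (hbox K L M N).filter (fun v => (Q2 m v ∧ ¬ inLB K M N v) ∧ ¬ inBB K L M N v)
      = (hbox K L M N).filter (fun v => Q2 m v ∧ ¬ specP K L M N v) := by
    apply filter_ext
    intro v
    constructor
    · rintro ⟨⟨hQv, hnLB⟩, hnBB⟩
      refine ⟨hQv, ?_⟩
      intro hs
      obtain ⟨hd, hle⟩ := hQv
      rw [specP_iff] at hs
      rw [inLB_iff] at hnLB
      rw [inBB_iff] at hnBB
      omega
    · rintro ⟨hQv, hns⟩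
      exact ⟨⟨hQv, fun h => hns (Or.inr (Or.inr (Or.inr (Or.inl h))))⟩,
        fun h => hns (Or.inr (Or.inr (Or.inr (Or.inr (Or.inl h)))))⟩
  -- evaluate the pieces of the left-hand side
  have hLB : ∑ v ∈ (hbox K L M N).filter (fun v => Q2 m v ∧ inLB K M N v), outdeg f.E v
      = ∑ i ∈ Finset.range (min m (M + N - K)),
          (if lB.getD i false = false then 1 else 0) := by
    have hchar : ∀ v, (inH K L M N v ∧ (Q2 m v ∧ inLB K M N v))
        ↔ ∃ i, i < min m (M + N - K) ∧ v = LBv i := by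
      intro v
      constructor
      · rintro ⟨hH, hQv, i, hi, rfl⟩
        obtain ⟨hd, hle⟩ := hQv
        simp only [LBv] at hle
        exact ⟨i, by omega, rfl⟩
      · rintro ⟨i, hi, rfl⟩
        refine ⟨LBv_inH hNKL (by omega), ⟨?_, ?_⟩, ⟨i, by omega, rfl⟩⟩
        · show ¬ (2 : ℤ) ∣ ((LBv i).1 - (LBv i).2)
          simp only [LBv]
          omega
        · show (LBv i).1 - (LBv i).2 ≤ 2 * (m : ℤ) - 1
          simp only [LBv]
          omega
    refine (sum_special (fun v => outdeg f.E v) hchar (fun i j h => LBv_inj h)).trans ?_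
    apply Finset.sum_congr rfl
    intro i hi
    exact outdeg_LBv_eq hOB (by have := Finset.mem_range.mp hi; omega)
  have hBB : ∑ v ∈ (hbox K L M N).filter
        (fun v => (Q2 m v ∧ ¬ inLB K M N v) ∧ inBB K L M N v), outdeg f.E v
      = ∑ i ∈ Finset.range (min (m - (M + N - K)) (K + L - N)),
          (if b.getD i false = false then 1 else 0) := by
    have hchar : ∀ v, (inH K L M N v ∧ ((Q2 m v ∧ ¬ inLB K M N v) ∧ inBB K L M N v))
        ↔ ∃ i, i < min (m - (M + N - K)) (K + L - N) ∧ v = BBv K M N i := by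
      intro v
      constructor
      · rintro ⟨hH, ⟨hQv, _⟩, i, hi, rfl⟩
        obtain ⟨hd, hle⟩ := hQv
        simp only [BBv] at hle
        exact ⟨i, by omega, rfl⟩
      · rintro ⟨i, hi, rfl⟩
        refine ⟨BBv_inH hKMN hMN (by omega), ⟨⟨?_, ?_⟩, ?_⟩, ⟨i, by omega, rfl⟩⟩
        · show ¬ (2 : ℤ) ∣ ((BBv K M N i).1 - (BBv K M N i).2)
          simp only [BBv]
          omega
        · show (BBv K M N i).1 - (BBv K M N i).2 ≤ 2 * (m : ℤ) - 1
          simp only [BBv]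
          omega
        · rw [inLB_iff]
          simp only [BBv]
          omega
    refine (sum_special (fun v => outdeg f.E v) hchar (fun i j h => BBv_inj h)).trans ?_
    apply Finset.sum_congr rfl
    intro i hi
    exact outdeg_BBv_eq hOB (by have := Finset.mem_range.mp hi; omega)
  have hIntQ : ∑ v ∈ (hbox K L M N).filter (fun v => Q2 m v ∧ ¬ specP K L M N v),
        outdeg f.E v
      = ((hbox K L M N).filter (fun v => Q2 m v ∧ ¬ specP K L M N v)).card := by
    have h : ∀ v ∈ (hbox K L M N).filter (fun v => Q2 m v ∧ ¬ specP K L M N v),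
        outdeg f.E v = 1 := by
      intro v hv
      obtain ⟨hb, _, hns⟩ := Finset.mem_filter.mp hv
      exact (interior_flow f (mem_hbox.mp hb) hns).2
    rw [Finset.sum_congr rfl h]
    simp
  -- decompose the right-hand side
  have hp1 : ((hbox K L M N).filter (P2 m)).filter (inTT K L)
      = (hbox K L M N).filter (fun v => P2 m v ∧ inTT K L v) := Finset.filter_filter _ _ _
  have hp2 : ((hbox K L M N).filter (P2 m)).filter (fun v => ¬ inTT K L v)
      = (hbox K L M N).filter (fun v => P2 m v ∧ ¬ inTT K L v) := Finset.filter_filter _ _ _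
  have hsplit3 : ∑ v ∈ (hbox K L M N).filter (P2 m), indeg f.E v
      = ∑ v ∈ (hbox K L M N).filter (fun v => P2 m v ∧ inTT K L v), indeg f.E v
        + ∑ v ∈ (hbox K L M N).filter (fun v => P2 m v ∧ ¬ inTT K L v), indeg f.E v := by
    have h := Finset.sum_filter_add_sum_filter_not ((hbox K L M N).filter (P2 m))
      (inTT K L) (fun v => indeg f.E v)
    rw [hp1, hp2] at h
    exact h.symm
  have hp3 : ((hbox K L M N).filter (fun v => P2 m v ∧ ¬ inTT K L v)).filter (inRT K L M)
      = (hbox K L M N).filter (fun v => (P2 m v ∧ ¬ inTT K L v) ∧ inRT K L M v) :=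
    Finset.filter_filter _ _ _
  have hp4 : ((hbox K L M N).filter (fun v => P2 m v ∧ ¬ inTT K L v)).filter
        (fun v => ¬ inRT K L M v)
      = (hbox K L M N).filter (fun v => (P2 m v ∧ ¬ inTT K L v) ∧ ¬ inRT K L M v) :=
    Finset.filter_filter _ _ _
  have hsplit4 : ∑ v ∈ (hbox K L M N).filter (fun v => P2 m v ∧ ¬ inTT K L v), indeg f.E v
      = ∑ v ∈ (hbox K L M N).filter
            (fun v => (P2 m v ∧ ¬ inTT K L v) ∧ inRT K L M v), indeg f.E v
        + ∑ v ∈ (hbox K L M N).filter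
            (fun v => (P2 m v ∧ ¬ inTT K L v) ∧ ¬ inRT K L M v), indeg f.E v := by
    have h := Finset.sum_filter_add_sum_filter_not
      ((hbox K L M N).filter (fun v => P2 m v ∧ ¬ inTT K L v)) (inRT K L M)
      (fun v => indeg f.E v)
    rw [hp3, hp4] at h
    exact h.symm
  have hp5 : ((hbox K L M N).filter
        (fun v => (P2 m v ∧ ¬ inTT K L v) ∧ ¬ inRT K L M v)).filter (specP K L M N)
      = (hbox K L M N).filter
          (fun v => ((P2 m v ∧ ¬ inTT K L v) ∧ ¬ inRT K L M v) ∧ specP K L M N v) :=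
    Finset.filter_filter _ _ _
  have hp6 : ((hbox K L M N).filter
        (fun v => (P2 m v ∧ ¬ inTT K L v) ∧ ¬ inRT K L M v)).filter
        (fun v => ¬ specP K L M N v)
      = (hbox K L M N).filter
          (fun v => ((P2 m v ∧ ¬ inTT K L v) ∧ ¬ inRT K L M v) ∧ ¬ specP K L M N v) :=
    Finset.filter_filter _ _ _
  have hsplit5 : ∑ v ∈ (hbox K L M N).filter
        (fun v => (P2 m v ∧ ¬ inTT K L v) ∧ ¬ inRT K L M v), indeg f.E v
      = ∑ v ∈ (hbox K L M N).filter
            (fun v => ((P2 m v ∧ ¬ inTT K L v) ∧ ¬ inRT K L M v) ∧ specP K L M N v),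
          indeg f.E v
        + ∑ v ∈ (hbox K L M N).filter
            (fun v => ((P2 m v ∧ ¬ inTT K L v) ∧ ¬ inRT K L M v) ∧ ¬ specP K L M N v),
          indeg f.E v := by
    have h := Finset.sum_filter_add_sum_filter_not
      ((hbox K L M N).filter (fun v => (P2 m v ∧ ¬ inTT K L v) ∧ ¬ inRT K L M v))
      (specP K L M N) (fun v => indeg f.E v)
    rw [hp5, hp6] at h
    exact h.symm
  have hzero : ∑ v ∈ (hbox K L M N).filter
        (fun v => ((P2 m v ∧ ¬ inTT K L v) ∧ ¬ inRT K L M v) ∧ specP K L M N v),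
      indeg f.E v = 0 := by
    apply Finset.sum_eq_zero
    intro v hv
    obtain ⟨hb, ⟨⟨hPv, hnTT⟩, hnRT⟩, hs⟩ := Finset.mem_filter.mp hv
    obtain ⟨hd, hle⟩ := hPv
    have hLT : inLT K v := by
      rcases hs with h | h | h | h | h | h
      · exact h
      · exact absurd h hnTT
      · exact absurd h hnRT
      · exfalso; rw [inLB_iff] at h; omega
      · exfalso; rw [inBB_iff] at h; omega
      · exfalso; rw [inRB_iff] at h; omega
    exact indeg_eq_zero_left f (Or.inl hLT)
  have hremP : (hbox K L M N).filter
        (fun v => ((P2 m v ∧ ¬ inTT K L v) ∧ ¬ inRT K L M v) ∧ ¬ specP K L M N v)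
      = (hbox K L M N).filter (fun v => P2 m v ∧ ¬ specP K L M N v) := by
    apply filter_ext
    intro v
    constructor
    · rintro ⟨⟨⟨hPv, _⟩, _⟩, hns⟩
      exact ⟨hPv, hns⟩
    · rintro ⟨hPv, hns⟩
      exact ⟨⟨⟨hPv, fun h => hns (Or.inr (Or.inl h))⟩,
        fun h => hns (Or.inr (Or.inr (Or.inl h)))⟩, hns⟩
  -- evaluate the pieces of the right-hand side
  have hTT : ∑ v ∈ (hbox K L M N).filter (fun v => P2 m v ∧ inTT K L v), indeg f.E v
      = ∑ i ∈ Finset.range (min m L), (if t.getD i false = false then 1 else 0) := by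
    have hchar : ∀ v, (inH K L M N v ∧ (P2 m v ∧ inTT K L v))
        ↔ ∃ i, i < min m L ∧ v = TTv K i := by
      intro v
      constructor
      · rintro ⟨hH, hPv, i, hi, rfl⟩
        obtain ⟨hd, hle⟩ := hPv
        simp only [TTv] at hle
        exact ⟨i, by omega, rfl⟩
      · rintro ⟨i, hi, rfl⟩
        refine ⟨TTv_inH hMN (by omega), ⟨?_, ?_⟩, ⟨i, by omega, rfl⟩⟩
        · show (2 : ℤ) ∣ ((TTv K i).1 - (TTv K i).2)
          simp only [TTv]
          omega
        · show (TTv K i).1 - (TTv K i).2 ≤ 2 * (m : ℤ)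
          simp only [TTv]
          omega
    refine (sum_special (fun v => indeg f.E v) hchar (fun i j h => TTv_inj h)).trans ?_
    apply Finset.sum_congr rfl
    intro i hi
    exact indeg_TTv_eq hOB (by have := Finset.mem_range.mp hi; omega)
  have hRT : ∑ v ∈ (hbox K L M N).filter
        (fun v => (P2 m v ∧ ¬ inTT K L v) ∧ inRT K L M v), indeg f.E v
      = ∑ i ∈ Finset.range (min (m - L) M), (if rT.getD i false = false then 1 else 0) := by
    have hchar : ∀ v, (inH K L M N v ∧ ((P2 m v ∧ ¬ inTT K L v) ∧ inRT K L M v))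
        ↔ ∃ i, i < min (m - L) M ∧ v = RTv K L i := by
      intro v
      constructor
      · rintro ⟨hH, ⟨hPv, _⟩, i, hi, rfl⟩
        obtain ⟨hd, hle⟩ := hPv
        simp only [RTv] at hle
        exact ⟨i, by omega, rfl⟩
      · rintro ⟨i, hi, rfl⟩
        refine ⟨RTv_inH hNKL (by omega), ⟨⟨?_, ?_⟩, ?_⟩, ⟨i, by omega, rfl⟩⟩
        · show (2 : ℤ) ∣ ((RTv K L i).1 - (RTv K L i).2)
          simp only [RTv]
          omega
        · show (RTv K L i).1 - (RTv K L i).2 ≤ 2 * (m : ℤ)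
          simp only [RTv]
          omega
        · rw [inTT_iff]
          simp only [RTv]
          omega
    refine (sum_special (fun v => indeg f.E v) hchar (fun i j h => RTv_inj h)).trans ?_
    apply Finset.sum_congr rfl
    intro i hi
    exact indeg_RTv_eq hOB (by have := Finset.mem_range.mp hi; omega)
  have hIntP : ∑ v ∈ (hbox K L M N).filter (fun v => P2 m v ∧ ¬ specP K L M N v),
        indeg f.E v
      = ((hbox K L M N).filter (fun v => P2 m v ∧ ¬ specP K L M N v)).card := by
    have h : ∀ v ∈ (hbox K L M N).filter (fun v => P2 m v ∧ ¬ specP K L M N v),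
        indeg f.E v = 1 := by
      intro v hv
      obtain ⟨hb, _, hns⟩ := Finset.mem_filter.mp hv
      exact (interior_flow f (mem_hbox.mp hb) hns).1
    rw [Finset.sum_congr rfl h]
    simp
  have hcards : ((hbox K L M N).filter (fun v => P2 m v ∧ ¬ specP K L M N v)).card
      = ((hbox K L M N).filter (fun v => Q2 m v ∧ ¬ specP K L M N v)).card :=
    int_card_eq2 hKMN hNKL hMN m
  -- put everything together
  have eLB : (lB.take m).count false
      = ∑ i ∈ Finset.range (min m (M + N - K)),
          (if lB.getD i false = false then 1 else 0) := by
    rw [word_count_false_take, hlB]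
  have eBB : (b.take (m - (M + N - K))).count false
      = ∑ i ∈ Finset.range (min (m - (M + N - K)) (K + L - N)),
          (if b.getD i false = false then 1 else 0) := by
    rw [word_count_false_take, hbl]
  have eTT : (t.take m).count false
      = ∑ i ∈ Finset.range (min m L), (if t.getD i false = false then 1 else 0) := by
    rw [word_count_false_take, ht]
  have eRT : (rT.take (m - L)).count false
      = ∑ i ∈ Finset.range (min (m - L) M), (if rT.getD i false = false then 1 else 0) := by
    rw [word_count_false_take, hrT]
  rw [hsplit1, hsplit2, hremQ, hLB, hBB, hIntQ] at hcore
  rw [hsplit3, hsplit4, hsplit5, hzero, hremP, hTT, hRT, hIntP] at hcore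
  omega

end DominanceProof

/-- If there exists an oriented HFPL with boundary
`(l_T,t,r_T;r_B,b,l_B)`, then `l_T t ≤ b r_B` and `t r_T ≤ l_B b`. -/
theorem oriented_HFPL_boundary_dominance
    (K L M N : ℕ) (hKMN : K ≤ M + N) (hNKL : N ≤ K + L)
    (lT t rT rB b lB : Word)
    (hlT : lT.length = K) (ht : t.length = L) (hrT : rT.length = M)
    (hrB : rB.length = N) (hb : b.length = K + L - N) (hlB : lB.length = M + N - K)
    (hpos : 0 < hvec K L M N lT t rT rB b lB) :
    wordLE (lT ++ t) (b ++ rB) ∧ wordLE (t ++ rT) (lB ++ b) := by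
  classical
  have hne : Nonempty {f : OHFPL K L M N // OBoundary f lT t rT rB b lB} := by
    by_contra hc
    rw [not_nonempty_iff] at hc
    unfold hvec at hpos
    rw [@Nat.card_of_isEmpty _ hc] at hpos
    exact lt_irrefl 0 hpos
  obtain ⟨⟨f, hOB⟩⟩ := hne
  by_cases hMN : 1 ≤ M + N
  · -- main case
    constructor
    · -- first inequality
      have hstep : ∀ m, m ≤ K + L →
          ((lT ++ t).take m).count true ≤ ((b ++ rB).take m).count true := by
        intro m hm
        rw [List.take_append, List.take_append,
          List.count_append, List.count_append, hlT, hb]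
        exact key1 hKMN hNKL hMN f lT t rT rB b lB hOB hlT ht hrB hb m hm
      intro m
      by_cases hm : m ≤ K + L
      · exact hstep m hm
      · have hlen1 : (lT ++ t).length ≤ m := by
          rw [List.length_append, hlT, ht]; omega
        have hlen2 : (b ++ rB).length ≤ m := by
          rw [List.length_append, hb, hrB]; omega
        have hlen1' : (lT ++ t).length ≤ K + L := by
          rw [List.length_append, hlT, ht]
        have hlen2' : (b ++ rB).length ≤ K + L := by
          rw [List.length_append, hb, hrB]; omega
        rw [List.take_of_length_le hlen1, List.take_of_length_le hlen2,
          ← List.take_of_length_le hlen1', ← List.take_of_length_le hlen2']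
        exact hstep (K + L) le_rfl
    · -- second inequality
      have hstep : ∀ m, m ≤ M + L →
          ((t ++ rT).take m).count true ≤ ((lB ++ b).take m).count true := by
        intro m hm
        have hkey := key2 hKMN hNKL hMN f lT t rT rB b lB hOB ht hrT hlB hb m hm
        have hf1 : ((t ++ rT).take m).count false
            = (t.take m).count false + (rT.take (m - L)).count false := by
          rw [List.take_append, List.count_append, ht]
        have hf2 : ((lB ++ b).take m).count false
            = (lB.take m).count false + (b.take (m - (M + N - K))).count false := by
          rw [List.take_append, List.count_append, hlB]
        have ha1 := word_count_add ((t ++ rT).take m)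
        have ha2 := word_count_add ((lB ++ b).take m)
        have hl1 : ((t ++ rT).take m).length = min m (L + M) := by
          rw [List.length_take, List.length_append, ht, hrT]
        have hl2 : ((lB ++ b).take m).length = min m ((M + N - K) + (K + L - N)) := by
          rw [List.length_take, List.length_append, hlB, hb]
        omega
      intro m
      by_cases hm : m ≤ M + L
      · exact hstep m hm
      · have hlen1 : (t ++ rT).length ≤ m := by
          rw [List.length_append, ht, hrT]; omega
        have hlen2 : (lB ++ b).length ≤ m := by
          rw [List.length_append, hlB, hb]; omega
        have hlen1' : (t ++ rT).length ≤ M + L := by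
          rw [List.length_append, ht, hrT]; omega
        have hlen2' : (lB ++ b).length ≤ M + L := by
          rw [List.length_append, hlB, hb]; omega
        rw [List.take_of_length_le hlen1, List.take_of_length_le hlen2,
          ← List.take_of_length_le hlen1', ← List.take_of_length_le hlen2']
        exact hstep (M + L) le_rfl
  · -- degenerate case  M + N = 0
    have hK : K = 0 := by omega
    by_cases hL : L = 0
    · have e1 : lT = [] := List.length_eq_zero_iff.mp (by omega)
      have e2 : t = [] := List.length_eq_zero_iff.mp (by omega)
      have e3 : rT = [] := List.length_eq_zero_iff.mp (by omega)
      have e4 : rB = [] := List.length_eq_zero_iff.mp (by omega)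
      have e5 : b = [] := List.length_eq_zero_iff.mp (by omega)
      have e6 : lB = [] := List.length_eq_zero_iff.mp (by omega)
      subst e1; subst e2; subst e3; subst e4; subst e5; subst e6
      constructor <;> · intro m; simp
    · exfalso
      have h1 := f.degTB (TTv K 0) (Or.inl ⟨0, by omega, rfl⟩)
      unfold ndeg at h1
      obtain ⟨w, hw⟩ := Finset.card_eq_one.mp h1
      have hwmem : w ∈ ({((TTv K 0).1 + 1, (TTv K 0).2), ((TTv K 0).1 - 1, (TTv K 0).2),
          ((TTv K 0).1, (TTv K 0).2 + 1), ((TTv K 0).1, (TTv K 0).2 - 1)} : Finset V).filter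
          (fun x => UAdj f.E (TTv K 0) x) := by
        rw [hw]; exact Finset.mem_singleton_self w
      have hU := (Finset.mem_filter.mp hwmem).2
      have hin : inH K L M N (TTv K 0) := by
        rcases hU with hE | hE
        · exact (f.valid _ _ hE).1
        · exact (f.valid _ _ hE).2.1
      simp only [inH, TTv] at hin
      omega

end
end HFPLpaper2014
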